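/- An even subdivision of the graph T (two disjoint odd cycles joined by a single edge, each edge subdivided an even number of times) has a unique perfect matching. -/

import Mathlib

open SimpleGraph

variable {V : Type*}

/-- A graph has a perfect matching. -/
def HasPM (G : SimpleGraph V) : Prop := ∃ M : G.Subgraph, M.IsPerfectMatching

/-- A set of vertices is independent (pairwise nonadjacent). -/
def IsIndep (G : SimpleGraph V) (s : Set V) : Prop := ∀ x ∈ s, ∀ y ∈ s, ¬ G.Adj x y

/-- The independence number. -/
noncomputable def alphaNum (G : SimpleGraph V) : ℕ :=
  sSup {n | ∃ s : Set V, IsIndep G s ∧ s.ncard = n}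

/-- The matching number. -/
noncomputable def matchNum (G : SimpleGraph V) : ℕ :=
  sSup {n | ∃ M : G.Subgraph, M.IsMatching ∧ M.edgeSet.ncard = n}

/-- A graph is König-Egerváry if α + ν = n. -/
def IsKE (G : SimpleGraph V) : Prop := alphaNum G + matchNum G = Nat.card V

/-- `G` is (the whole graph) an even subdivision of `K₄`: four corner vertices and six
internally disjoint odd paths joining each pair of corners, comprising all vertices
and edges of `G`. -/
def IsEvenSubdivK4 (G : SimpleGraph V) : Prop :=
  ∃ (c : Fin 4 → V) (P : ∀ i j : Fin 4, G.Walk (c i) (c j)),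
    Function.Injective c ∧
    (∀ i j : Fin 4, P j i = (P i j).reverse) ∧
    (∀ i j : Fin 4, i ≠ j → (P i j).IsPath ∧ Odd (P i j).length) ∧
    (∀ i j k l : Fin 4, i ≠ j → k ≠ l → ¬(i = k ∧ j = l) → ¬(i = l ∧ j = k) →
      ∀ x : V, x ∈ (P i j).support → x ∈ (P k l).support → x ∈ Set.range c) ∧
    (∀ x : V, ∃ i j : Fin 4, i ≠ j ∧ x ∈ (P i j).support) ∧
    (∀ e : Sym2 V, e ∈ G.edgeSet ↔ ∃ i j : Fin 4, i ≠ j ∧ e ∈ (P i j).edges)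

/-- `G` is (the whole graph) an even subdivision of `T`: two vertex-disjoint odd cycles
joined at blossom tips `v`, `w` by an odd path internally disjoint from the cycles,
comprising all vertices and edges of `G`. -/
def IsEvenSubdivT (G : SimpleGraph V) : Prop :=
  ∃ (v w : V) (C1 : G.Walk v v) (C2 : G.Walk w w) (P : G.Walk v w),
    C1.IsCycle ∧ C2.IsCycle ∧ Odd C1.length ∧ Odd C2.length ∧
    P.IsPath ∧ Odd P.length ∧
    (∀ x : V, x ∈ C1.support → x ∉ C2.support) ∧
    (∀ x : V, x ∈ P.support → x ∈ C1.support → x = v) ∧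
    (∀ x : V, x ∈ P.support → x ∈ C2.support → x = w) ∧
    (∀ x : V, x ∈ C1.support ∨ x ∈ C2.support ∨ x ∈ P.support) ∧
    (∀ e : Sym2 V, e ∈ G.edgeSet ↔ e ∈ C1.edges ∨ e ∈ C2.edges ∨ e ∈ P.edges)

/-- `G` contains a nice even subdivision of `T`: a subgraph `H` which is an even
subdivision of `T` and such that `G - V(H)` has a perfect matching. -/
def HasNiceEvenSubdivT (G : SimpleGraph V) : Prop :=
  ∃ H : G.Subgraph, IsEvenSubdivT H.coe ∧ HasPM (G.induce (H.vertsᶜ))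

/-- `G` has a spanning subgraph whose components are independent edges together with a
positive number of vertex-disjoint odd cycles. -/
def HasOddCycleCover (G : SimpleGraph V) : Prop :=
  ∃ (M : G.Subgraph) (k : ℕ) (u : Fin k → V) (C : ∀ i : Fin k, G.Walk (u i) (u i)),
    0 < k ∧ M.IsMatching ∧
    (∀ i, (C i).IsCycle ∧ Odd (C i).length) ∧
    (∀ i j, i ≠ j → ∀ x : V, x ∈ (C i).support → x ∉ (C j).support) ∧
    (∀ i, ∀ x ∈ (C i).support, x ∉ M.verts) ∧
    (∀ x : V, x ∈ M.verts ∨ ∃ i, x ∈ (C i).support)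

/-- A matchable graph is Egerváry iff it has no such spanning cover. -/
def IsEgervary (G : SimpleGraph V) : Prop := ¬ HasOddCycleCover G

/-- `G` contains two vertex-disjoint odd cycles. -/
def TwoDisjointOddCycles (G : SimpleGraph V) : Prop :=
  ∃ (a b : V) (C1 : G.Walk a a) (C2 : G.Walk b b),
    C1.IsCycle ∧ C2.IsCycle ∧ Odd C1.length ∧ Odd C2.length ∧
    ∀ x : V, x ∈ C1.support → x ∉ C2.support

/-- `G` is α-critical: deleting any edge increases the independence number. -/
def AlphaCritical (G : SimpleGraph V) : Prop :=
  ∀ e ∈ G.edgeSet, alphaNum (G.deleteEdges {e}) = alphaNum G + 1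

/-- The (open) neighborhood of a set of vertices. -/
def setN (G : SimpleGraph V) (I : Set V) : Set V := {x | x ∉ I ∧ ∃ y ∈ I, G.Adj x y}

namespace ESubT

variable {V : Type*} {G : SimpleGraph V}

def altL {α : Type*} : List α → List α
  | [] => []
  | [e] => [e]
  | e :: _ :: es => e :: altL es

@[simp] lemma altL_nil {α : Type*} : altL ([] : List α) = [] := rfl
@[simp] lemma altL_one {α : Type*} (e : α) : altL [e] = [e] := rfl
@[simp] lemma altL_two {α : Type*} (e f : α) (es : List α) :
    altL (e :: f :: es) = e :: altL es := rfl

lemma altL_subset {α : Type*} (l : List α) : ∀ x ∈ altL l, x ∈ l := by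
  induction l using altL.induct with
  | case1 => simp
  | case2 e => simp
  | case3 e f es ih =>
      intro x hx
      simp only [altL_two, List.mem_cons] at hx ⊢
      rcases hx with h | h
      · exact Or.inl h
      · exact Or.inr (Or.inr (ih x h))

@[elab_as_elim]
def Walk.twoStepRec {motive : ∀ a b : V, G.Walk a b → Prop}
    (hnil : ∀ a, motive a a .nil)
    (hsingle : ∀ a b (h : G.Adj a b), motive a b (.cons h .nil))
    (hstep : ∀ a c d b (h : G.Adj a c) (h' : G.Adj c d) (q : G.Walk d b),
      motive d b q → motive a b (.cons h (.cons h' q))) :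
    ∀ a b (W : G.Walk a b), motive a b W
  | _, _, .nil => hnil _
  | _, _, .cons h .nil => hsingle _ _ h
  | _, _, .cons h (.cons h' q) => hstep _ _ _ _ h h' q (Walk.twoStepRec hnil hsingle hstep _ _ q)

lemma altL_edges_subset {a b : V} (W : G.Walk a b) : ∀ e ∈ altL W.edges, e ∈ W.edges :=
  altL_subset _

lemma odd_of_odd_plus_two {n : ℕ} (h : Odd (n + 2)) : Odd n := by
  rcases h with ⟨k, hk⟩; exact ⟨k - 1, by omega⟩

lemma even_of_even_plus_two {n : ℕ} (h : Even (n + 2)) : Even n := by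
  rcases h with ⟨k, hk⟩; exact ⟨k - 1, by omega⟩

/-- In an odd path, the alternating edges cover exactly the support. -/
lemma oddAlt {a b : V} (W : G.Walk a b) (hp : W.IsPath) (ho : Odd W.length) :
    ∀ x, (∃ y, s(x, y) ∈ altL W.edges) ↔ x ∈ W.support := by
  induction a, b, W using Walk.twoStepRec with
  | hnil a => simp at ho
  | hsingle a b h =>
      intro x
      rw [Walk.edges_cons, Walk.edges_nil, altL_one]
      simp only [List.mem_singleton, Walk.support_cons, Walk.support_nil, List.mem_cons,
        List.mem_singleton, List.not_mem_nil, or_false]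
      constructor
      · rintro ⟨y, hy⟩
        rw [Sym2.eq_iff] at hy
        rcases hy with ⟨rfl, _⟩ | ⟨rfl, _⟩ <;> simp
      · rintro (rfl | rfl)
        · exact ⟨b, rfl⟩
        · exact ⟨a, Sym2.eq_swap⟩
  | hstep a c d b h h' q ih =>
      have hq : q.IsPath := (((Walk.cons_isPath_iff _ _).mp hp).1).of_cons
      have hqo : Odd q.length := by
        rw [Walk.length_cons, Walk.length_cons] at ho
        exact odd_of_odd_plus_two ho
      intro x
      rw [Walk.edges_cons, Walk.edges_cons, altL_two]
      simp only [List.mem_cons, Walk.support_cons]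
      constructor
      · rintro ⟨y, hy | hy⟩
        · rw [Sym2.eq_iff] at hy
          rcases hy with ⟨rfl, _⟩ | ⟨rfl, _⟩ <;> simp
        · have hx := (ih hq hqo x).mp ⟨y, hy⟩
          simp [hx]
      · rintro (rfl | rfl | hx)
        · exact ⟨c, Or.inl rfl⟩
        · exact ⟨a, Or.inl Sym2.eq_swap⟩
        · obtain ⟨y, hy⟩ := (ih hq hqo x).mpr hx
          exact ⟨y, Or.inr hy⟩

/-- In an even path, the alternating edges cover exactly the support minus the endpoint. -/
lemma evenAlt {a b : V} (W : G.Walk a b) (hp : W.IsPath) (he : Even W.length) :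
    ∀ x, (∃ y, s(x, y) ∈ altL W.edges) ↔ (x ∈ W.support ∧ x ≠ b) := by
  induction a, b, W using Walk.twoStepRec with
  | hnil a => intro x; simp
  | hsingle a b h => simp [Nat.even_add_one] at he
  | hstep a c d b h h' q ih =>
      obtain ⟨hp1, ha⟩ := (Walk.cons_isPath_iff _ _).mp hp
      obtain ⟨hq, hc⟩ := (Walk.cons_isPath_iff _ _).mp hp1
      rw [Walk.support_cons] at ha
      have haq : a ∉ q.support := fun hx => ha (List.mem_cons_of_mem _ hx)
      have hab : a ≠ b := fun hab => haq (hab ▸ q.end_mem_support)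
      have hcb : c ≠ b := fun hcb => hc (hcb ▸ q.end_mem_support)
      have hqe : Even q.length := by
        rw [Walk.length_cons, Walk.length_cons] at he
        exact even_of_even_plus_two he
      intro x
      rw [Walk.edges_cons, Walk.edges_cons, altL_two]
      simp only [List.mem_cons, Walk.support_cons]
      constructor
      · rintro ⟨y, hy | hy⟩
        · rw [Sym2.eq_iff] at hy
          rcases hy with ⟨rfl, _⟩ | ⟨rfl, _⟩
          · exact ⟨Or.inl rfl, hab⟩
          · exact ⟨Or.inr (Or.inl rfl), hcb⟩
        · obtain ⟨hx, hxb⟩ := (ih hq hqe x).mp ⟨y, hy⟩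
          exact ⟨Or.inr (Or.inr hx), hxb⟩
      · rintro ⟨rfl | rfl | hx, hxb⟩
        · exact ⟨c, Or.inl rfl⟩
        · exact ⟨a, Or.inl Sym2.eq_swap⟩
        · obtain ⟨y, hy⟩ := (ih hq hqe x).mpr ⟨hx, hxb⟩
          exact ⟨y, Or.inr hy⟩

/-- Alternating edges of a path are pairwise vertex-disjoint. -/
lemma altDisjoint {a b : V} (W : G.Walk a b) (hp : W.IsPath) :
    ∀ x y z, s(x, y) ∈ altL W.edges → s(x, z) ∈ altL W.edges → y = z := by
  induction a, b, W using Walk.twoStepRec with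
  | hnil a => simp
  | hsingle a b h =>
      intro x y z hy hz
      rw [Walk.edges_cons, Walk.edges_nil, altL_one, List.mem_singleton] at hy hz
      rw [← hz] at hy
      exact Sym2.congr_right.mp hy
  | hstep a c d b h h' q ih =>
      obtain ⟨hp1, ha⟩ := (Walk.cons_isPath_iff _ _).mp hp
      obtain ⟨hq, hc⟩ := (Walk.cons_isPath_iff _ _).mp hp1
      rw [Walk.support_cons] at ha
      have haq : a ∉ q.support := fun hx => ha (List.mem_cons_of_mem _ hx)
      intro x y z hy hz
      rw [Walk.edges_cons, Walk.edges_cons, altL_two, List.mem_cons] at hy hz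
      have aux : ∀ u : V, s(x, u) = s(a, c) → ∀ t : V, s(x, t) ∈ altL q.edges → False := by
        intro u hu t ht
        have hxq : x ∈ q.support := q.fst_mem_support_of_mem_edges (altL_edges_subset q _ ht)
        rw [Sym2.eq_iff] at hu
        rcases hu with ⟨rfl, _⟩ | ⟨rfl, _⟩
        · exact haq hxq
        · exact hc hxq
      rcases hy with hy | hy <;> rcases hz with hz | hz
      · rw [← hz] at hy; exact Sym2.congr_right.mp hy
      · exact absurd hz (fun hz => aux y hy z hz)
      · exact absurd hy (fun hy => aux z hz y hy)
      · exact ih hq x y z hy hz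

lemma matchUnique {M : G.Subgraph} (hM : M.IsMatching) {x y z : V}
    (hy : M.Adj x y) (hz : M.Adj x z) : y = z := by
  obtain ⟨w, _, hu⟩ := hM (M.edge_vert hy)
  rw [hu y hy, hu z hz]

/-- Forcing lemma (odd case): a matching whose edges at the vertices of an odd path all
lie on the path must use precisely the alternating edges. -/
lemma forceOdd (M : G.Subgraph) (hM : M.IsMatching) {a b : V} (W : G.Walk a b)
    (hp : W.IsPath) (ho : Odd W.length)
    (hcov : ∀ x ∈ W.support, x ∈ M.verts)
    (hedge : ∀ x ∈ W.support, ∀ y, M.Adj x y → s(x, y) ∈ W.edges) :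
    ∀ x ∈ W.support, ∀ y, M.Adj x y → s(x, y) ∈ altL W.edges := by
  induction a, b, W using Walk.twoStepRec with
  | hnil a => simp at ho
  | hsingle a b h =>
      intro x hx y hxy
      rw [Walk.edges_cons, Walk.edges_nil, altL_one]
      exact hedge x hx y hxy
  | hstep a c d b h h' q ih =>
      obtain ⟨hp1, ha⟩ := (Walk.cons_isPath_iff _ _).mp hp
      obtain ⟨hq, hc⟩ := (Walk.cons_isPath_iff _ _).mp hp1
      rw [Walk.support_cons] at ha
      have haq : a ∉ q.support := fun hx => ha (List.mem_cons_of_mem _ hx)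
      have hqo : Odd q.length := by
        rw [Walk.length_cons, Walk.length_cons] at ho
        exact odd_of_odd_plus_two ho
      have hmem : ∀ x ∈ q.support, x ∈ (Walk.cons h (Walk.cons h' q)).support := by
        intro x hx
        rw [Walk.support_cons, Walk.support_cons]
        exact List.mem_cons_of_mem _ (List.mem_cons_of_mem _ hx)
      -- the partner of `a` is `c`
      obtain ⟨y₀, hy₀, hu⟩ := hM (hcov a (Walk.start_mem_support _))
      have he₀ := hedge a (Walk.start_mem_support _) y₀ hy₀
      rw [Walk.edges_cons, Walk.edges_cons, List.mem_cons, List.mem_cons] at he₀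
      have Mac : M.Adj a c := by
        rcases he₀ with he | he | he
        · rw [Sym2.eq_iff] at he
          rcases he with ⟨-, rfl⟩ | ⟨rfl, -⟩
          · exact hy₀
          · exact absurd rfl h.ne
        · rw [Sym2.eq_iff] at he
          rcases he with ⟨rfl, -⟩ | ⟨rfl, -⟩
          · exact absurd rfl h.ne
          · exact absurd (q.start_mem_support) haq
        · exact absurd (q.fst_mem_support_of_mem_edges he) haq
      have hca : ∀ y, M.Adj c y → y = a := fun y hy => matchUnique hM hy Mac.symm
      have hedge' : ∀ x ∈ q.support, ∀ y, M.Adj x y → s(x, y) ∈ q.edges := by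
        intro x hx y hxy
        have he := hedge x (hmem x hx) y hxy
        rw [Walk.edges_cons, Walk.edges_cons, List.mem_cons, List.mem_cons] at he
        rcases he with he | he | he
        · rw [Sym2.eq_iff] at he
          rcases he with ⟨rfl, -⟩ | ⟨rfl, -⟩
          · exact absurd hx haq
          · exact absurd hx hc
        · rw [Sym2.eq_iff] at he
          rcases he with ⟨rfl, -⟩ | ⟨rfl, rfl⟩
          · exact absurd hx hc
          · exact absurd (hca _ hxy.symm ▸ q.start_mem_support : a ∈ q.support) haq
        · exact he
      have hcov' : ∀ x ∈ q.support, x ∈ M.verts := fun x hx => hcov x (hmem x hx)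
      intro x hx y hxy
      rw [Walk.support_cons, Walk.support_cons, List.mem_cons, List.mem_cons] at hx
      rw [Walk.edges_cons, Walk.edges_cons, altL_two, List.mem_cons]
      rcases hx with rfl | rfl | hx
      · left; rw [hu y hxy, ← hu c Mac]
      · left; rw [hca y hxy]; exact Sym2.eq_swap
      · exact Or.inr (ih hq hqo hcov' hedge' x hx y hxy)

/-- Forcing lemma (even case): similar, excluding the final vertex. -/
lemma forceEven (M : G.Subgraph) (hM : M.IsMatching) {a b : V} (W : G.Walk a b)
    (hp : W.IsPath) (he : Even W.length)
    (hcov : ∀ x ∈ W.support, x ∈ M.verts)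
    (hedge : ∀ x ∈ W.support, x ≠ b → ∀ y, M.Adj x y → s(x, y) ∈ W.edges) :
    ∀ x ∈ W.support, x ≠ b → ∀ y, M.Adj x y → s(x, y) ∈ altL W.edges := by
  induction a, b, W using Walk.twoStepRec with
  | hnil a =>
      intro x hx hxb
      rw [Walk.support_nil, List.mem_singleton] at hx
      exact absurd hx hxb
  | hsingle a b h => simp [Nat.even_add_one] at he
  | hstep a c d b h h' q ih =>
      obtain ⟨hp1, ha⟩ := (Walk.cons_isPath_iff _ _).mp hp
      obtain ⟨hq, hc⟩ := (Walk.cons_isPath_iff _ _).mp hp1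
      rw [Walk.support_cons] at ha
      have haq : a ∉ q.support := fun hx => ha (List.mem_cons_of_mem _ hx)
      have hab : a ≠ b := fun hab => haq (hab ▸ q.end_mem_support)
      have hcb : c ≠ b := fun hcb => hc (hcb ▸ q.end_mem_support)
      have hqe : Even q.length := by
        rw [Walk.length_cons, Walk.length_cons] at he
        exact even_of_even_plus_two he
      have hmem : ∀ x ∈ q.support, x ∈ (Walk.cons h (Walk.cons h' q)).support := by
        intro x hx
        rw [Walk.support_cons, Walk.support_cons]
        exact List.mem_cons_of_mem _ (List.mem_cons_of_mem _ hx)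
      obtain ⟨y₀, hy₀, hu⟩ := hM (hcov a (Walk.start_mem_support _))
      have he₀ := hedge a (Walk.start_mem_support _) hab y₀ hy₀
      rw [Walk.edges_cons, Walk.edges_cons, List.mem_cons, List.mem_cons] at he₀
      have Mac : M.Adj a c := by
        rcases he₀ with he | he | he
        · rw [Sym2.eq_iff] at he
          rcases he with ⟨-, rfl⟩ | ⟨rfl, -⟩
          · exact hy₀
          · exact absurd rfl h.ne
        · rw [Sym2.eq_iff] at he
          rcases he with ⟨rfl, -⟩ | ⟨rfl, -⟩
          · exact absurd rfl h.ne
          · exact absurd (q.start_mem_support) haq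
        · exact absurd (q.fst_mem_support_of_mem_edges he) haq
      have hca : ∀ y, M.Adj c y → y = a := fun y hy => matchUnique hM hy Mac.symm
      have hedge' : ∀ x ∈ q.support, x ≠ b → ∀ y, M.Adj x y → s(x, y) ∈ q.edges := by
        intro x hx hxb y hxy
        have he := hedge x (hmem x hx) hxb y hxy
        rw [Walk.edges_cons, Walk.edges_cons, List.mem_cons, List.mem_cons] at he
        rcases he with he | he | he
        · rw [Sym2.eq_iff] at he
          rcases he with ⟨rfl, -⟩ | ⟨rfl, -⟩
          · exact absurd hx haq
          · exact absurd hx hc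
        · rw [Sym2.eq_iff] at he
          rcases he with ⟨rfl, -⟩ | ⟨rfl, rfl⟩
          · exact absurd hx hc
          · exact absurd (hca _ hxy.symm ▸ q.start_mem_support : a ∈ q.support) haq
        · exact he
      have hcov' : ∀ x ∈ q.support, x ∈ M.verts := fun x hx => hcov x (hmem x hx)
      intro x hx hxb y hxy
      rw [Walk.support_cons, Walk.support_cons, List.mem_cons, List.mem_cons] at hx
      rw [Walk.edges_cons, Walk.edges_cons, altL_two, List.mem_cons]
      rcases hx with rfl | rfl | hx
      · left; rw [hu y hxy, ← hu c Mac]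
      · left; rw [hca y hxy]; exact Sym2.eq_swap
      · exact Or.inr (ih hq hqe hcov' hedge' x hx hxb y hxy)

/-- Parity: if all vertices of an even path except possibly the endpoint `v` are matched
within the path, then the partner of `v` is outside the path. -/
lemma path_parity [Fintype V] (M : G.Subgraph) (hM : M.IsPerfectMatching) {c v : V}
    (W : G.Walk c v) (hp : W.IsPath) (he : Even W.length)
    (hclosed : ∀ x ∈ W.support, x ≠ v → ∀ y, M.Adj x y → y ∈ W.support) :
    ∀ y, M.Adj v y → y ∉ W.support := by
  intro y₀ hadj hy₀
  classical
  set S : Set V := {x | x ∈ W.support} with hS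
  have closed : ∀ x ∈ S, ∀ y, M.Adj x y → y ∈ S := by
    intro x hx y hxy
    by_cases hxv : x = v
    · subst hxv
      have := matchUnique hM.1 hxy hadj
      subst this
      exact hy₀
    · exact hclosed x hx hxv y hxy
  let N : G.Subgraph :=
    { verts := S
      Adj := fun x y => M.Adj x y ∧ x ∈ S ∧ y ∈ S
      adj_sub := fun h => M.adj_sub h.1
      edge_vert := fun h => h.2.1
      symm := ⟨fun x y h => ⟨h.1.symm, h.2.2, h.2.1⟩⟩ }
  have hN : N.IsMatching := by
    intro x hx
    obtain ⟨y, hy, hu⟩ := hM.1 (hM.2 x)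
    exact ⟨y, ⟨hy, hx, closed x hx y hy⟩, fun z hz => hu z hz.1⟩
  haveI : Fintype N.verts := Fintype.ofFinite _
  have heven := hN.even_card
  have hfin : N.verts.toFinset = W.support.toFinset := by
    ext x
    simp [N, S]
  rw [hfin, List.toFinset_card_of_nodup hp.support_nodup, Walk.length_support] at heven
  rw [Nat.even_add_one] at heven
  exact heven he

end ESubT

open ESubT in
/-- An even subdivision of `T` has a unique perfect matching. -/
theorem evenSubdivT_unique_perfectMatching {V : Type*} [Fintype V] (G : SimpleGraph V)
    (h : IsEvenSubdivT G) : ∃! M : G.Subgraph, M.IsPerfectMatching := by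
  classical
  obtain ⟨v, w, C1, C2, P, hC1, hC2, ho1, ho2, hP, hoP, hdisj, hPC1, hPC2, hsupp, hedges⟩ := h
  cases C1 with
  | nil => exact absurd hC1 Walk.IsCycle.not_of_nil
  | @cons _ c1 _ h1 W1 =>
  cases C2 with
  | nil => exact absurd hC2 Walk.IsCycle.not_of_nil
  | @cons _ c2 _ h2 W2 =>
  obtain ⟨hW1p, -⟩ := (Walk.cons_isCycle_iff _ _).mp hC1
  obtain ⟨hW2p, -⟩ := (Walk.cons_isCycle_iff _ _).mp hC2
  have hW1e : Even W1.length := by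
    rw [Walk.length_cons, Nat.odd_add_one, Nat.not_odd_iff_even] at ho1; exact ho1
  have hW2e : Even W2.length := by
    rw [Walk.length_cons, Nat.odd_add_one, Nat.not_odd_iff_even] at ho2; exact ho2
  have hvW1 : v ∈ W1.support := W1.end_mem_support
  have hwW2 : w ∈ W2.support := W2.end_mem_support
  have hvC1 : v ∈ (Walk.cons h1 W1).support := Walk.start_mem_support _
  have hwC2 : w ∈ (Walk.cons h2 W2).support := Walk.start_mem_support _
  have hW1C1 : ∀ x ∈ W1.support, x ∈ (Walk.cons h1 W1).support := by
    intro x hx; rw [Walk.support_cons]; exact List.mem_cons_of_mem _ hx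
  have hW2C2 : ∀ x ∈ W2.support, x ∈ (Walk.cons h2 W2).support := by
    intro x hx; rw [Walk.support_cons]; exact List.mem_cons_of_mem _ hx
  -- the candidate edge set
  set SA : Sym2 V → Prop :=
    fun e => e ∈ altL P.edges ∨ e ∈ altL W1.edges ∨ e ∈ altL W2.edges with hSA
  have SAsub : ∀ e, SA e → e ∈ G.edgeSet := by
    intro e he
    rcases he with he | he | he
    · exact P.edges_subset_edgeSet (altL_edges_subset P e he)
    · exact W1.edges_subset_edgeSet (altL_edges_subset W1 e he)
    · exact W2.edges_subset_edgeSet (altL_edges_subset W2 e he)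
  -- vertices touched by the candidate edges
  have memP : ∀ x y, s(x, y) ∈ altL P.edges → x ∈ P.support :=
    fun x y hxy => (oddAlt P hP hoP x).mp ⟨y, hxy⟩
  have memW1 : ∀ x y, s(x, y) ∈ altL W1.edges → x ∈ W1.support ∧ x ≠ v :=
    fun x y hxy => (evenAlt W1 hW1p hW1e x).mp ⟨y, hxy⟩
  have memW2 : ∀ x y, s(x, y) ∈ altL W2.edges → x ∈ W2.support ∧ x ≠ w :=
    fun x y hxy => (evenAlt W2 hW2p hW2e x).mp ⟨y, hxy⟩
  -- the candidate edges are pairwise vertex-disjoint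
  have Adisj : ∀ x y z, SA s(x, y) → SA s(x, z) → y = z := by
    intro x y z hy hz
    rcases hy with hy | hy | hy <;> rcases hz with hz | hz | hz
    · exact altDisjoint P hP x y z hy hz
    · exact absurd (hPC1 x (memP x y hy) (hW1C1 x (memW1 x z hz).1)) (memW1 x z hz).2
    · exact absurd (hPC2 x (memP x y hy) (hW2C2 x (memW2 x z hz).1)) (memW2 x z hz).2
    · exact absurd (hPC1 x (memP x z hz) (hW1C1 x (memW1 x y hy).1)) (memW1 x y hy).2
    · exact altDisjoint W1 hW1p x y z hy hz
    · exact absurd (hW2C2 x (memW2 x z hz).1) (hdisj x (hW1C1 x (memW1 x y hy).1))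
    · exact absurd (hPC2 x (memP x z hz) (hW2C2 x (memW2 x y hy).1)) (memW2 x y hy).2
    · exact absurd (hW2C2 x (memW2 x y hy).1) (hdisj x (hW1C1 x (memW1 x z hz).1))
    · exact altDisjoint W2 hW2p x y z hy hz
  -- the candidate edges cover every vertex
  have cover : ∀ x, ∃ y, SA s(x, y) := by
    intro x
    rcases hsupp x with hx | hx | hx
    · rw [Walk.support_cons, List.mem_cons] at hx
      by_cases hxv : x = v
      · subst hxv
        obtain ⟨y, hy⟩ := (oddAlt P hP hoP x).mpr P.start_mem_support
        exact ⟨y, Or.inl hy⟩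
      · have hxW1 : x ∈ W1.support := by
          rcases hx with rfl | hx
          · exact absurd rfl hxv
          · exact hx
        obtain ⟨y, hy⟩ := (evenAlt W1 hW1p hW1e x).mpr ⟨hxW1, hxv⟩
        exact ⟨y, Or.inr (Or.inl hy)⟩
    · rw [Walk.support_cons, List.mem_cons] at hx
      by_cases hxw : x = w
      · subst hxw
        obtain ⟨y, hy⟩ := (oddAlt P hP hoP x).mpr P.end_mem_support
        exact ⟨y, Or.inl hy⟩
      · have hxW2 : x ∈ W2.support := by
          rcases hx with rfl | hx
          · exact absurd rfl hxw
          · exact hx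
        obtain ⟨y, hy⟩ := (evenAlt W2 hW2p hW2e x).mpr ⟨hxW2, hxw⟩
        exact ⟨y, Or.inr (Or.inr hy)⟩
    · obtain ⟨y, hy⟩ := (oddAlt P hP hoP x).mpr hx
      exact ⟨y, Or.inl hy⟩
  -- the candidate perfect matching
  let M₀ : G.Subgraph :=
    { verts := Set.univ
      Adj := fun x y => SA s(x, y)
      adj_sub := fun hxy => (G.mem_edgeSet).mp (SAsub _ hxy)
      edge_vert := fun _ => Set.mem_univ _
      symm := ⟨fun x y hxy => by show SA s(y, x); rw [Sym2.eq_swap]; exact hxy⟩ }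
  have hM₀ : M₀.IsPerfectMatching := by
    constructor
    · intro x _
      obtain ⟨y, hy⟩ := cover x
      exact ⟨y, hy, fun z hz => Adisj x z y hz hy⟩
    · intro x
      exact Set.mem_univ _
  refine ⟨M₀, hM₀, ?_⟩
  -- uniqueness
  intro M hM
  -- partner of v lies on P
  have hclosed1 : ∀ x ∈ W1.support, x ≠ v → ∀ y, M.Adj x y → y ∈ W1.support := by
    intro x hx hxv y hxy
    have he := (hedges s(x, y)).mp (M.adj_sub hxy)
    rcases he with he | he | he
    · rw [Walk.edges_cons, List.mem_cons] at he
      rcases he with he | he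
      · rw [Sym2.eq_iff] at he
        rcases he with ⟨rfl, -⟩ | ⟨rfl, rfl⟩
        · exact absurd rfl hxv
        · exact hvW1
      · exact W1.snd_mem_support_of_mem_edges he
    · exact absurd ((Walk.cons h2 W2).fst_mem_support_of_mem_edges he)
        (hdisj x (hW1C1 x hx))
    · exact absurd (hPC1 x (P.fst_mem_support_of_mem_edges he) (hW1C1 x hx)) hxv
  have hclosed2 : ∀ x ∈ W2.support, x ≠ w → ∀ y, M.Adj x y → y ∈ W2.support := by
    intro x hx hxw y hxy
    have he := (hedges s(x, y)).mp (M.adj_sub hxy)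
    rcases he with he | he | he
    · exact absurd ((Walk.cons h1 W1).fst_mem_support_of_mem_edges he)
        (fun hh => hdisj x hh (hW2C2 x hx))
    · rw [Walk.edges_cons, List.mem_cons] at he
      rcases he with he | he
      · rw [Sym2.eq_iff] at he
        rcases he with ⟨rfl, -⟩ | ⟨rfl, rfl⟩
        · exact absurd rfl hxw
        · exact hwW2
      · exact W2.snd_mem_support_of_mem_edges he
    · exact absurd (hPC2 x (P.fst_mem_support_of_mem_edges he) (hW2C2 x hx)) hxw
  have hvout : ∀ y, M.Adj v y → y ∉ W1.support :=
    path_parity M hM W1 hW1p hW1e hclosed1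
  have hwout : ∀ y, M.Adj w y → y ∉ W2.support :=
    path_parity M hM W2 hW2p hW2e hclosed2
  obtain ⟨pv, hpv, hpu⟩ := hM.1 (hM.2 v)
  obtain ⟨pw, hpw, hpwu⟩ := hM.1 (hM.2 w)
  have hvP : s(v, pv) ∈ P.edges := by
    have he := (hedges s(v, pv)).mp (M.adj_sub hpv)
    rcases he with he | he | he
    · rw [Walk.edges_cons, List.mem_cons] at he
      rcases he with he | he
      · rw [Sym2.eq_iff] at he
        rcases he with ⟨-, rfl⟩ | ⟨rfl, -⟩
        · exact absurd W1.start_mem_support (hvout _ hpv)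
        · exact absurd rfl h1.ne
      · exact absurd (W1.snd_mem_support_of_mem_edges he) (hvout _ hpv)
    · exact absurd ((Walk.cons h2 W2).fst_mem_support_of_mem_edges he) (hdisj v hvC1)
    · exact he
  have hwP : s(w, pw) ∈ P.edges := by
    have he := (hedges s(w, pw)).mp (M.adj_sub hpw)
    rcases he with he | he | he
    · exact absurd ((Walk.cons h1 W1).fst_mem_support_of_mem_edges he)
        (fun hh => hdisj w hh hwC2)
    · rw [Walk.edges_cons, List.mem_cons] at he
      rcases he with he | he
      · rw [Sym2.eq_iff] at he
        rcases he with ⟨-, rfl⟩ | ⟨rfl, -⟩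
        · exact absurd W2.start_mem_support (hwout _ hpw)
        · exact absurd rfl h2.ne
      · exact absurd (W2.snd_mem_support_of_mem_edges he) (hwout _ hpw)
    · exact he
  have hedgeP : ∀ x ∈ P.support, ∀ y, M.Adj x y → s(x, y) ∈ P.edges := by
    intro x hx y hxy
    rcases (hedges s(x, y)).mp (M.adj_sub hxy) with he | he | he
    · have hxv : x = v := hPC1 x hx ((Walk.cons h1 W1).fst_mem_support_of_mem_edges he)
      subst hxv
      rw [hpu y hxy]
      exact hvP
    · have hxw : x = w := hPC2 x hx ((Walk.cons h2 W2).fst_mem_support_of_mem_edges he)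
      subst hxw
      rw [hpwu y hxy]
      exact hwP
    · exact he
  have FP := forceOdd M hM.1 P hP hoP (fun x _ => hM.2 x) hedgeP
  have hedgeW1 : ∀ x ∈ W1.support, x ≠ v → ∀ y, M.Adj x y → s(x, y) ∈ W1.edges := by
    intro x hx hxv y hxy
    rcases (hedges s(x, y)).mp (M.adj_sub hxy) with he | he | he
    · rw [Walk.edges_cons, List.mem_cons] at he
      rcases he with he | he
      · rw [Sym2.eq_iff] at he
        rcases he with ⟨rfl, -⟩ | ⟨hxc, hyv⟩
        · exact absurd rfl hxv
        · subst hyv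
          have hxP : x ∈ P.support := by
            rw [hpu x hxy.symm]
            exact P.snd_mem_support_of_mem_edges hvP
          exact absurd (hPC1 x hxP (hW1C1 x hx)) hxv
      · exact he
    · exact absurd ((Walk.cons h2 W2).fst_mem_support_of_mem_edges he)
        (fun hh => hdisj x (hW1C1 x hx) hh)
    · exact absurd (hPC1 x (P.fst_mem_support_of_mem_edges he) (hW1C1 x hx)) hxv
  have hedgeW2 : ∀ x ∈ W2.support, x ≠ w → ∀ y, M.Adj x y → s(x, y) ∈ W2.edges := by
    intro x hx hxw y hxy
    rcases (hedges s(x, y)).mp (M.adj_sub hxy) with he | he | he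
    · exact absurd ((Walk.cons h1 W1).fst_mem_support_of_mem_edges he)
        (fun hh => hdisj x hh (hW2C2 x hx))
    · rw [Walk.edges_cons, List.mem_cons] at he
      rcases he with he | he
      · rw [Sym2.eq_iff] at he
        rcases he with ⟨rfl, -⟩ | ⟨hxc, hyw⟩
        · exact absurd rfl hxw
        · subst hyw
          have hxP : x ∈ P.support := by
            rw [hpwu x hxy.symm]
            exact P.snd_mem_support_of_mem_edges hwP
          exact absurd (hPC2 x hxP (hW2C2 x hx)) hxw
      · exact he
    · exact absurd (hPC2 x (P.fst_mem_support_of_mem_edges he) (hW2C2 x hx)) hxw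
  have F1 := forceEven M hM.1 W1 hW1p hW1e (fun x _ => hM.2 x) hedgeW1
  have F2 := forceEven M hM.1 W2 hW2p hW2e (fun x _ => hM.2 x) hedgeW2
  have forced : ∀ x y, M.Adj x y → SA s(x, y) := by
    intro x y hxy
    rcases hsupp x with hx | hx | hx
    · by_cases hxv : x = v
      · subst hxv
        exact Or.inl (FP x P.start_mem_support y hxy)
      · have hxW1 : x ∈ W1.support := by
          rw [Walk.support_cons, List.mem_cons] at hx
          rcases hx with rfl | hx
          · exact absurd rfl hxv
          · exact hx
        exact Or.inr (Or.inl (F1 x hxW1 hxv y hxy))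
    · by_cases hxw : x = w
      · subst hxw
        exact Or.inl (FP x P.end_mem_support y hxy)
      · have hxW2 : x ∈ W2.support := by
          rw [Walk.support_cons, List.mem_cons] at hx
          rcases hx with rfl | hx
          · exact absurd rfl hxw
          · exact hx
        exact Or.inr (Or.inr (F2 x hxW2 hxw y hxy))
    · exact Or.inl (FP x hx y hxy)
  have hAdj : M.Adj = M₀.Adj := by
    funext x y
    apply propext
    constructor
    · exact forced x y
    · intro hz
      obtain ⟨pz, hpz, -⟩ := hM.1 (hM.2 x)
      have hforced := forced x pz hpz
      rw [Adisj x pz y hforced hz] at hpz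
      exact hpz
  exact Subgraph.ext (Set.eq_univ_of_forall hM.2) hAdj
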